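/- (Eneström–Kakeya) If p(z) = a₀ + a₁z + ⋯ + aₙzⁿ is a polynomial with real coefficients satisfying 0 ≤ a₀ ≤ a₁ ≤ ⋯ ≤ aₙ and aₙ > 0, then every complex zero of p lies in the closed unit disk. -/

import Mathlib

open Polynomial

theorem stmt_9 (p : Polynomial ℝ) (hn : 1 ≤ p.natDegree)
    (h0 : 0 ≤ p.coeff 0)
    (hmono : ∀ i j : ℕ, i ≤ j → j ≤ p.natDegree → p.coeff i ≤ p.coeff j)
    (hlead : 0 < p.coeff p.natDegree) :
    ∀ z : ℂ, Polynomial.aeval z p = 0 → ‖z‖ ≤ 1 := by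
  intro z hz
  by_contra hr
  push_neg at hr
  set n := p.natDegree with hn'
  set a : ℕ → ℝ := fun k => p.coeff k with ha
  set r := ‖z‖ with hrdef
  have hr1 : (1:ℝ) < r := hr
  have hr0 : (0:ℝ) < r := lt_trans one_pos hr1
  have hsum : ∑ k ∈ Finset.range (n+1), (a k : ℂ) * z ^ k = 0 := by
    have h := Polynomial.aeval_eq_sum_range (p := p) (x := z)
    rw [hz] at h
    refine Eq.trans ?_ h.symm
    refine Finset.sum_congr rfl fun k _ => ?_
    simp [Complex.real_smul, ha]
  have h1 : ∑ k ∈ Finset.range (n+1), (a k : ℂ) * z ^ (k+1) = 0 := by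
    have := congrArg (· * z) hsum
    simpa [Finset.sum_mul, mul_assoc, pow_succ] using this
  have h2 : ∑ k ∈ Finset.range (n+1), (a k : ℂ) * z ^ (k+1)
      = (∑ k ∈ Finset.range n, (a k : ℂ) * z ^ (k+1)) + (a n : ℂ) * z^(n+1) :=
    Finset.sum_range_succ _ n
  have h3 : ∑ k ∈ Finset.range (n+1), (a k : ℂ) * z ^ k
      = (a 0 : ℂ) + ∑ k ∈ Finset.range n, (a (k+1) : ℂ) * z^(k+1) := by
    rw [Finset.sum_range_succ']
    ring
  have key : (a n : ℂ) * z ^ (n+1) =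
      (a 0 : ℂ) + ∑ k ∈ Finset.range n, ((a (k+1) : ℂ) - a k) * z ^ (k+1) := by
    have hsub : ∑ k ∈ Finset.range n, ((a (k+1) : ℂ) - a k) * z ^ (k+1)
        = ∑ k ∈ Finset.range n, (a (k+1) : ℂ) * z^(k+1)
          - ∑ k ∈ Finset.range n, (a k : ℂ) * z^(k+1) := by
      rw [← Finset.sum_sub_distrib]
      exact Finset.sum_congr rfl fun k _ => by ring
    rw [hsub]
    linear_combination h1 - h2 - hsum + h3
  have hstep : ∀ k ∈ Finset.range n, 0 ≤ a (k+1) - a k := by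
    intro k hk
    have : k + 1 ≤ n := Finset.mem_range.mp hk
    exact sub_nonneg.mpr (hmono k (k+1) (Nat.le_succ k) this)
  have habs : a n * r^(n+1) ≤ a 0 + ∑ k ∈ Finset.range n, (a (k+1) - a k) * r^(k+1) := by
    have hL : ‖(a n : ℂ) * z^(n+1)‖ = a n * r^(n+1) := by
      rw [norm_mul, norm_pow, Complex.norm_real, Real.norm_eq_abs, abs_of_pos hlead]
    rw [← hL, key]
    calc ‖(a 0 : ℂ) + ∑ k ∈ Finset.range n, ((a (k+1) : ℂ) - a k) * z ^ (k+1)‖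
        ≤ ‖(a 0 : ℂ)‖
          + ‖∑ k ∈ Finset.range n, ((a (k+1) : ℂ) - a k) * z ^ (k+1)‖ :=
          norm_add_le _ _
      _ ≤ a 0 + ∑ k ∈ Finset.range n, (a (k+1) - a k) * r^(k+1) := by
          apply add_le_add
          · rw [Complex.norm_real, Real.norm_eq_abs, abs_of_nonneg h0]
          · refine le_trans (norm_sum_le _ _) (le_of_eq ?_)
            refine Finset.sum_congr rfl fun k hk => ?_
            rw [norm_mul, norm_pow]
            have : ((a (k+1) : ℂ) - a k) = ((a (k+1) - a k : ℝ) : ℂ) := by push_cast; ring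
            rw [this, Complex.norm_real, Real.norm_eq_abs, abs_of_nonneg (hstep k hk)]
  have h4 : a 0 + ∑ k ∈ Finset.range n, (a (k+1) - a k) * r^(k+1) ≤ a n * r^n := by
    have hrn : (1:ℝ) ≤ r^n := one_le_pow₀ hr1.le
    calc a 0 + ∑ k ∈ Finset.range n, (a (k+1) - a k) * r^(k+1)
        ≤ a 0 * r^n + ∑ k ∈ Finset.range n, (a (k+1) - a k) * r^n := by
          apply add_le_add (le_mul_of_one_le_right h0 hrn)
          refine Finset.sum_le_sum fun k hk => ?_
          exact mul_le_mul_of_nonneg_left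
            (pow_le_pow_right₀ hr1.le (Finset.mem_range.mp hk)) (hstep k hk)
      _ = (a 0 + ∑ k ∈ Finset.range n, (a (k+1) - a k)) * r^n := by
          rw [add_mul, Finset.sum_mul]
      _ = a n * r^n := by
          rw [Finset.sum_range_sub (f := a)]
          ring
  have hfin : a n * r^(n+1) ≤ a n * r^n := le_trans habs h4
  have hgt : a n * r^n < a n * r^(n+1) := by
    apply mul_lt_mul_of_pos_left _ hlead
    calc r^n = r^n * 1 := (mul_one _).symm
      _ < r^n * r := by
          exact mul_lt_mul_of_pos_left hr1 (pow_pos hr0 n)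
      _ = r^(n+1) := (pow_succ r n).symm
  exact absurd hfin (not_le.mpr hgt)
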